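/- arXiv:1905.07295 — 2 statements merged into one kernel-verified Lean document; each statement's English description precedes it below -/
import Mathlib

section
/- Let P ~ N(X, σ²) and h(x) = (x − X)(ℙ(P < x) − ℙ(P > x)). If |x − X| > √2 σ, then |h′(x)| ≥ 1. -/
open ProbabilityTheory MeasureTheory Set Filter Real

section Aux

variable {X σ : ℝ}

noncomputable def gpdf (X σ : ℝ) : ℝ → ℝ := gaussianPDFReal X ⟨σ ^ 2, sq_nonneg σ⟩

noncomputable def gpdf' (X σ : ℝ) : ℝ → ℝ := fun t => ((X - t) / σ ^ 2) * gpdf X σ t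

lemma gpdf_eq (X σ : ℝ) : gpdf X σ =
    fun u => (Real.sqrt (2 * Real.pi * σ ^ 2))⁻¹ * Real.exp (-(u - X) ^ 2 / (2 * σ ^ 2)) := rfl

lemma gpdf_nonneg (X σ : ℝ) (t : ℝ) : 0 ≤ gpdf X σ t := gaussianPDFReal_nonneg _ _ _

lemma v_ne_zero (hσ : 0 < σ) : (⟨σ ^ 2, sq_nonneg σ⟩ : NNReal) ≠ 0 := by
  apply NNReal.coe_ne_zero.mp
  show (σ ^ 2 : ℝ) ≠ 0
  positivity

lemma gpdf_hasDerivAt (hσ : 0 < σ) (t : ℝ) : HasDerivAt (gpdf X σ) (gpdf' X σ t) t := by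
  have hσ2 : (0:ℝ) < σ ^ 2 := by positivity
  have h1 : HasDerivAt (fun u : ℝ => -(u - X) ^ 2 / (2 * σ ^ 2))
      (-(2 * (t - X) ^ 1 * 1) / (2 * σ ^ 2)) t :=
    (((hasDerivAt_id t).sub_const X).pow 2).neg.div_const (2 * σ ^ 2)
  have h2 := (h1.exp).const_mul (Real.sqrt (2 * Real.pi * σ ^ 2))⁻¹
  rw [gpdf_eq]
  refine HasDerivAt.congr_deriv h2 ?_
  simp only [gpdf', gpdf_eq]
  field_simp
  ring

lemma gpdf'_integrable (hσ : 0 < σ) : Integrable (gpdf' X σ) := by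
  have hσ2 : (0:ℝ) < σ ^ 2 := by positivity
  have hb : (0:ℝ) < (2 * σ ^ 2)⁻¹ := by positivity
  have h0 : Integrable (fun u : ℝ => u * Real.exp (-(2 * σ ^ 2)⁻¹ * u ^ 2)) :=
    integrable_mul_exp_neg_mul_sq hb
  have h1 := ((h0.const_mul (-(Real.sqrt (2 * Real.pi * σ ^ 2))⁻¹ / σ ^ 2)).comp_sub_right X)
  convert h1 using 1
  funext t
  simp only [Function.comp, gpdf', gpdf_eq]
  rw [show -(2 * σ ^ 2)⁻¹ * (t - X) ^ 2 = -(t - X) ^ 2 / (2 * σ ^ 2) by field_simp]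
  field_simp
  ring

lemma gpdf_tendsto (hσ : 0 < σ) {l : Filter ℝ}
    (hl : Tendsto (fun t : ℝ => (t - X) ^ 2) l atTop) :
    Tendsto (gpdf X σ) l (nhds 0) := by
  have hσ2 : (0:ℝ) < σ ^ 2 := by positivity
  have h1 : Tendsto (fun t : ℝ => -(t - X) ^ 2 / (2 * σ ^ 2)) l atBot := by
    have := (hl.atTop_div_const (by positivity : (0:ℝ) < 2 * σ ^ 2))
    have h2 := tendsto_neg_atTop_atBot.comp this
    refine h2.congr fun t => ?_
    simp [Function.comp, neg_div]
  have h3 := (Real.tendsto_exp_atBot.comp h1).const_mul (Real.sqrt (2 * Real.pi * σ ^ 2))⁻¹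
  rw [gpdf_eq]
  simpa [Function.comp] using h3

lemma sq_tendsto_atTop (X : ℝ) : Tendsto (fun t : ℝ => (t - X) ^ 2) atTop atTop := by
  have h1 : Tendsto (fun t : ℝ => t - X) atTop atTop := tendsto_atTop_add_const_right _ (-X) tendsto_id
  exact (tendsto_pow_atTop two_ne_zero).comp h1

lemma sq_tendsto_atBot (X : ℝ) : Tendsto (fun t : ℝ => (t - X) ^ 2) atBot atTop := by
  have h1 : Tendsto (fun t : ℝ => X - t) atBot atTop := by
    have := tendsto_neg_atBot_atTop.comp (tendsto_atBot_add_const_right _ (-X) tendsto_id)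
    refine this.congr fun t => ?_
    simp [Function.comp]; ring
  have := (tendsto_pow_atTop two_ne_zero).comp h1
  refine this.congr fun t => ?_
  simp [Function.comp]; ring

end Aux

section CDF

variable {X σ : ℝ}

noncomputable def gcdf (X σ : ℝ) (x : ℝ) : ℝ := ∫ t in Set.Iio x, gpdf X σ t

lemma gpdf_integrable (X σ : ℝ) : Integrable (gpdf X σ) := integrable_gaussianPDFReal _ _

lemma gpdf_integral_one (hσ : 0 < σ) : ∫ t, gpdf X σ t = 1 :=
  integral_gaussianPDFReal_eq_one X (v_ne_zero hσ)

lemma measure_toReal (hσ : 0 < σ) {s : Set ℝ} (hs : MeasurableSet s) :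
    ((gaussianReal X ⟨σ ^ 2, sq_nonneg σ⟩) s).toReal = ∫ t in s, gpdf X σ t := by
  rw [gaussianReal_apply_eq_integral X (v_ne_zero hσ) s, ENNReal.toReal_ofReal]
  · rfl
  · exact setIntegral_nonneg hs fun t _ => gpdf_nonneg X σ t

lemma measure_Iio (hσ : 0 < σ) (x : ℝ) :
    ((gaussianReal X ⟨σ ^ 2, sq_nonneg σ⟩) (Set.Iio x)).toReal = gcdf X σ x :=
  measure_toReal hσ measurableSet_Iio

lemma gcdf_Iic (x : ℝ) : gcdf X σ x = ∫ t in Set.Iic x, gpdf X σ t :=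
  (integral_Iic_eq_integral_Iio).symm

lemma measure_Ioi (hσ : 0 < σ) (x : ℝ) :
    ((gaussianReal X ⟨σ ^ 2, sq_nonneg σ⟩) (Set.Ioi x)).toReal = 1 - gcdf X σ x := by
  rw [measure_toReal hσ measurableSet_Ioi]
  have h := integral_add_compl (measurableSet_Iic (a := x)) (gpdf_integrable X σ)
  rw [compl_Iic] at h
  rw [gcdf_Iic]
  rw [gpdf_integral_one hσ] at h
  linarith

lemma gcdf_hasDerivAt (hσ : 0 < σ) (x : ℝ) : HasDerivAt (gcdf X σ) (gpdf X σ x) x := by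
  have hfun : gcdf X σ = fun y => gcdf X σ X + ∫ t in X..y, gpdf X σ t := by
    funext y
    have heq := intervalIntegral.integral_Iic_sub_Iic (μ := volume)
      ((gpdf_integrable X σ).integrableOn) ((gpdf_integrable X σ).integrableOn) (a := X) (b := y)
    rw [gcdf_Iic (x := y), gcdf_Iic (x := X), ← heq]
    ring
  rw [hfun]
  have h := intervalIntegral.integral_hasDerivAt_right (a := X)
    ((gpdf_integrable X σ).intervalIntegrable)
    ((gpdf_integrable X σ).aestronglyMeasurable.stronglyMeasurableAtFilter)
    (gpdf_hasDerivAt hσ x).continuousAt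
  simpa using h.const_add (gcdf X σ X)

lemma tail_right (hσ : 0 < σ) (x : ℝ) :
    ∫ t in Set.Ioi x, gpdf' X σ t = -gpdf X σ x := by
  have h := integral_Ioi_of_hasDerivAt_of_tendsto' (f := gpdf X σ) (f' := gpdf' X σ) (a := x)
    (fun t _ => gpdf_hasDerivAt hσ t) (gpdf'_integrable hσ).integrableOn
    (gpdf_tendsto hσ (sq_tendsto_atTop X))
  rw [h]; ring

lemma tail_left (hσ : 0 < σ) (x : ℝ) :
    ∫ t in Set.Iic x, gpdf' X σ t = gpdf X σ x := by
  have h := integral_Iic_of_hasDerivAt_of_tendsto' (f := gpdf X σ) (f' := gpdf' X σ) (a := x)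
    (fun t _ => gpdf_hasDerivAt hσ t) (gpdf'_integrable hσ).integrableOn
    (gpdf_tendsto hσ (sq_tendsto_atBot X))
  rw [h]; ring

end CDF

section Mills

variable {X σ : ℝ}

lemma mills_right (hσ : 0 < σ) {x : ℝ} (hs0 : 0 < x - X) :
    1 - gcdf X σ x ≤ (σ ^ 2 / (x - X)) * gpdf X σ x := by
  have hσ2 : (0:ℝ) < σ ^ 2 := by positivity
  have hle : ∫ t in Set.Ioi x, gpdf X σ t ≤
      ∫ t in Set.Ioi x, (-(σ ^ 2 / (x - X))) * gpdf' X σ t := by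
    refine setIntegral_mono_on ((gpdf_integrable X σ).integrableOn)
      (((gpdf'_integrable hσ).const_mul _).integrableOn) measurableSet_Ioi ?_
    intro t ht
    have ht' : x < t := ht
    have hrw : (-(σ ^ 2 / (x - X))) * gpdf' X σ t = ((t - X) / (x - X)) * gpdf X σ t := by
      simp only [gpdf']
      field_simp
      ring
    rw [hrw]
    have h1 : (1:ℝ) ≤ (t - X) / (x - X) := by
      rw [le_div_iff₀ hs0]; linarith
    exact le_mul_of_one_le_left (gpdf_nonneg X σ t) h1
  rw [MeasureTheory.integral_const_mul, tail_right hσ x] at hle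
  have hF := measure_Ioi (σ := σ) (X := X) hσ x
  have h2 : ∫ t in Set.Ioi x, gpdf X σ t = 1 - gcdf X σ x := by
    rw [← measure_toReal hσ measurableSet_Ioi, hF]
  rw [h2] at hle
  linarith [hle]

lemma mills_left (hσ : 0 < σ) {x : ℝ} (hs0 : 0 < X - x) :
    gcdf X σ x ≤ (σ ^ 2 / (X - x)) * gpdf X σ x := by
  have hσ2 : (0:ℝ) < σ ^ 2 := by positivity
  have hle : ∫ t in Set.Iic x, gpdf X σ t ≤
      ∫ t in Set.Iic x, ((σ ^ 2 / (X - x))) * gpdf' X σ t := by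
    refine setIntegral_mono_on ((gpdf_integrable X σ).integrableOn)
      (((gpdf'_integrable hσ).const_mul _).integrableOn) measurableSet_Iic ?_
    intro t ht
    have ht' : t ≤ x := ht
    have hrw : ((σ ^ 2 / (X - x))) * gpdf' X σ t = ((X - t) / (X - x)) * gpdf X σ t := by
      simp only [gpdf']
      field_simp
    rw [hrw]
    have h1 : (1:ℝ) ≤ (X - t) / (X - x) := by
      rw [le_div_iff₀ hs0]; linarith
    exact le_mul_of_one_le_left (gpdf_nonneg X σ t) h1
  rw [MeasureTheory.integral_const_mul, tail_left hσ x] at hle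
  rw [← gcdf_Iic] at hle
  exact hle

end Mills

theorem stmt_4 (X σ : ℝ) (hσ : 0 < σ)
    (μ : Measure ℝ) (hμ : μ = gaussianReal X ⟨σ ^ 2, sq_nonneg σ⟩)
    (h : ℝ → ℝ)
    (hh : ∀ x : ℝ, h x = (x - X) * ((μ {y | y < x}).toReal - (μ {y | x < y}).toReal)) :
    ∀ x : ℝ, |x - X| > Real.sqrt 2 * σ → 1 ≤ |deriv h x| := by
  intro x hx
  have hσ2 : (0:ℝ) < σ ^ 2 := by positivity
  have hfx := gpdf_nonneg X σ x
  have hhf : h = fun y => (y - X) * (2 * gcdf X σ y - 1) := by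
    funext y
    rw [hh y, hμ]
    have h1 : {z : ℝ | z < y} = Set.Iio y := rfl
    have h2 : {z : ℝ | y < z} = Set.Ioi y := rfl
    rw [h1, h2, measure_Iio hσ, measure_Ioi hσ]
    ring
  have hd : HasDerivAt h ((2 * gcdf X σ x - 1) + (x - X) * (2 * gpdf X σ x)) x := by
    rw [hhf]
    have hprod := (((hasDerivAt_id x).sub_const X).mul
      ((((gcdf_hasDerivAt (X := X) hσ x)).const_mul 2).sub_const 1))
    refine HasDerivAt.congr_deriv hprod ?_
    simp only [id_eq]
    ring
  rw [hd.deriv]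
  have hsqrt2 : (0:ℝ) < Real.sqrt 2 * σ := by positivity
  have hsq2 : Real.sqrt 2 ^ 2 = 2 := Real.sq_sqrt (by norm_num)
  rcases le_or_gt 0 (x - X) with hcase | hcase
  · have hs : Real.sqrt 2 * σ < x - X := by rwa [abs_of_nonneg hcase] at hx
    have hs0 : 0 < x - X := lt_trans hsqrt2 hs
    have hvsq : σ ^ 2 ≤ (x - X) ^ 2 := by nlinarith [Real.sqrt_nonneg 2]
    have hm := mills_right (σ := σ) hσ hs0
    have hdiv : σ ^ 2 / (x - X) ≤ x - X := by
      rw [div_le_iff₀ hs0]; nlinarith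
    have hkey : 1 - gcdf X σ x ≤ (x - X) * gpdf X σ x :=
      le_trans hm (mul_le_mul_of_nonneg_right hdiv hfx)
    have hge : 1 ≤ (2 * gcdf X σ x - 1) + (x - X) * (2 * gpdf X σ x) := by nlinarith
    exact le_trans hge (le_abs_self _)
  · have hs : Real.sqrt 2 * σ < X - x := by
      rw [abs_of_neg hcase] at hx; linarith
    have hs0 : 0 < X - x := lt_trans hsqrt2 hs
    have hvsq : σ ^ 2 ≤ (X - x) ^ 2 := by nlinarith [Real.sqrt_nonneg 2]
    have hm := mills_left (σ := σ) hσ hs0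
    have hdiv : σ ^ 2 / (X - x) ≤ X - x := by
      rw [div_le_iff₀ hs0]; nlinarith
    have hkey : gcdf X σ x ≤ (X - x) * gpdf X σ x :=
      le_trans hm (mul_le_mul_of_nonneg_right hdiv hfx)
    have hle : (2 * gcdf X σ x - 1) + (x - X) * (2 * gpdf X σ x) ≤ -1 := by nlinarith
    have : 1 ≤ -((2 * gcdf X σ x - 1) + (x - X) * (2 * gpdf X σ x)) := by linarith
    exact le_trans this (neg_le_abs _)
end

section
/- Let T_k = 2^k and λ, μ > 0. Then liminf_{k→∞} Π_{k' ≥ k} (1 − T_{k'}^{-2})^{(λ T_{k'} + μ + 2)(λ T_k + μ + 2)} ≥ e^{−2λ²}. In fact the limit exists and equals e^{−2λ²}. -/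
open Filter
open Real

lemma mylog_le {x : ℝ} (hx : x < 1) : Real.log (1 - x) ≤ -x := by
  have h1 : (0:ℝ) < 1 - x := by linarith
  have := Real.log_le_sub_one_of_pos h1
  linarith

lemma mylog_ge {x : ℝ} (hx0 : 0 < x) (hx : x ≤ 1/2) : -(x + 2*x^2) ≤ Real.log (1 - x) := by
  have h1 : (0:ℝ) < 1 - x := by linarith
  have h2 : (0:ℝ) < (1 - x)⁻¹ := by positivity
  have h3 := Real.log_le_sub_one_of_pos h2
  rw [Real.log_inv] at h3
  have h4 : (1-x)⁻¹ - 1 = x / (1-x) := by field_simp; ring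
  have h5 : x / (1-x) ≤ x + 2*x^2 := by
    rw [div_le_iff₀ h1]; nlinarith
  linarith

set_option maxHeartbeats 1000000 in
lemma key (lam mu : ℝ) (hlam : 0 < lam) (hmu : 0 < mu) (k : ℕ) (hk : 1 ≤ k) :
    Summable (fun j : ℕ => Real.log (1 - ((2:ℝ)^(k+j))⁻¹^2) *
        ((lam * 2^(k+j) + mu + 2) * (lam * 2^k + mu + 2))) ∧
    (∑' j : ℕ, Real.log (1 - ((2:ℝ)^(k+j))⁻¹^2) *
        ((lam * 2^(k+j) + mu + 2) * (lam * 2^k + mu + 2))) ≤ -(lam^2*2) ∧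
    -((lam + (mu+2)*(1/2)^k)^2*(1+2*(1/4)^k)*2) ≤
      (∑' j : ℕ, Real.log (1 - ((2:ℝ)^(k+j))⁻¹^2) *
        ((lam * 2^(k+j) + mu + 2) * (lam * 2^k + mu + 2))) ∧
    (∏' j : ℕ, (1 - ((2:ℝ)^(k+j))⁻¹^2) ^ ((lam*2^(k+j)+mu+2)*(lam*2^k+mu+2)))
      = Real.exp (∑' j : ℕ, Real.log (1 - ((2:ℝ)^(k+j))⁻¹^2) *
        ((lam * 2^(k+j) + mu + 2) * (lam * 2^k + mu + 2))) := by
  set g : ℕ → ℝ := fun j => Real.log (1 - ((2:ℝ)^(k+j))⁻¹^2) *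
      ((lam * 2^(k+j) + mu + 2) * (lam * 2^k + mu + 2)) with hg
  set B : ℝ := lam + (mu+2)*(1/2)^k with hB
  set C : ℝ := B^2*(1+2*(1/4)^k) with hC
  have hu2 : (2:ℝ) ≤ 2^k := by
    calc (2:ℝ) = 2^1 := by norm_num
    _ ≤ 2^k := by exact pow_le_pow_right₀ (by norm_num) hk
  have hu0 : (0:ℝ) < 2^k := by positivity
  have hw2 : ((1/2:ℝ)^k)^2 = (1/4)^k := by
    rw [← pow_mul, mul_comm, pow_mul]; norm_num
  have hwu : ((1/2:ℝ)^k) * 2^k = 1 := by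
    rw [div_pow, one_pow, div_mul_eq_mul_div, one_mul, div_self (by positivity)]
  -- pointwise bounds
  have pt : ∀ j : ℕ, (0 < 1 - ((2:ℝ)^(k+j))⁻¹^2) ∧
      -(C*(1/2)^j) ≤ g j ∧ g j ≤ -(lam^2*(1/2)^j) := by
    intro j
    have hv1 : (1:ℝ) ≤ 2^j := one_le_pow₀ (by norm_num)
    have hv0 : (0:ℝ) < 2^j := by positivity
    have hz : ((1/2:ℝ)^j) * 2^j = 1 := by
      rw [div_pow, one_pow, div_mul_eq_mul_div, one_mul, div_self (by positivity)]
    have hz1 : ((1/2:ℝ)^j) ≤ 1 := by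
      apply pow_le_one₀ <;> norm_num
    have hz0 : (0:ℝ) < (1/2)^j := by positivity
    have hxval : ((2:ℝ)^(k+j))⁻¹^2 = ((1/2)^k)^2 * ((1/2)^j)^2 := by
      rw [pow_add, mul_inv, mul_pow]
      congr 1 <;> rw [← inv_pow] <;> norm_num
    set x : ℝ := ((2:ℝ)^(k+j))⁻¹^2 with hxdef
    have hx0 : 0 < x := by positivity
    have hx4 : x ≤ 1/4 := by
      rw [hxval]
      calc ((1/2:ℝ)^k)^2 * ((1/2)^j)^2 ≤ (1/2)^2 * 1 := by
            apply mul_le_mul _ _ (by positivity) (by norm_num)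
            · apply pow_le_pow_left₀ (by positivity)
              calc (1/2:ℝ)^k ≤ (1/2)^1 := by
                    apply pow_le_pow_of_le_one (by norm_num) (by norm_num) hk
                _ = 1/2 := by norm_num
            · calc ((1/2:ℝ)^j)^2 ≤ 1^2 := by
                    apply pow_le_pow_left₀ (by positivity) hz1
                _ = 1 := by norm_num
        _ = 1/4 := by norm_num
    have hbase : 0 < 1 - x := by linarith
    set e : ℝ := (lam * 2^(k+j) + mu + 2) * (lam * 2^k + mu + 2) with he
    have he0 : 0 < e := by
      apply mul_pos <;> positivity
    -- x * e bounds
    have hxe_low : lam^2 * (1/2)^j ≤ x * e := by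
      have h1 : lam^2 * 2^(k+j) * 2^k ≤ e := by
        rw [he]; nlinarith [pow_pos (show (0:ℝ)<2 by norm_num) (k+j), pow_pos (show (0:ℝ)<2 by norm_num) k, mul_pos hlam (pow_pos (show (0:ℝ)<2 by norm_num) (k+j)), mul_pos hlam (pow_pos (show (0:ℝ)<2 by norm_num) k)]
      have h2 : x * (lam^2 * 2^(k+j) * 2^k) = lam^2 * (1/2)^j := by
        have expand : ((1/2:ℝ)^k)^2 * ((1/2)^j)^2 * (lam^2 * (2^k*2^j) * 2^k)
            = lam^2 * (((((1/2:ℝ)^k)*2^k)*(((1/2)^k)*2^k)) * ((((1/2)^j)*2^j)*(1/2)^j)) := by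
          ring
        rw [hxval, pow_add, expand, hwu, hz]; ring
      calc lam^2 * (1/2)^j = x * (lam^2 * 2^(k+j) * 2^k) := h2.symm
        _ ≤ x * e := by apply mul_le_mul_of_nonneg_left h1 hx0.le
    have hxe_high : x * e ≤ B^2 * (1/2)^j := by
      have h1 : e ≤ B^2 * (2^(k+j) * 2^k) := by
        have hf1 : lam * 2^(k+j) + mu + 2 ≤ B * 2^(k+j) := by
          rw [hB, pow_add]
          have : (mu+2) ≤ (mu+2) * ((1/2)^k * (2^k * 2^j)) := by
            rw [show (1/2:ℝ)^k * (2^k*2^j) = ((1/2)^k * 2^k) * 2^j by ring, hwu, one_mul]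
            nlinarith
          nlinarith
        have hf2 : lam * 2^k + mu + 2 = B * 2^k := by
          have h : B * 2^k = lam*2^k + (mu+2)*((1/2)^k * 2^k) := by rw [hB]; ring
          rw [h, hwu, mul_one]; ring
        have hB0 : 0 < B := by positivity
        calc e = (lam * 2^(k+j) + mu + 2) * (lam * 2^k + mu + 2) := he
          _ ≤ (B * 2^(k+j)) * (B * 2^k) := by
              apply mul_le_mul hf1 (le_of_eq hf2) (by positivity) (by positivity)
          _ = B^2 * (2^(k+j) * 2^k) := by ring
      have h2 : x * (2^(k+j) * 2^k) = (1/2)^j := by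
        rw [hxval, pow_add]
        have expand : ((1/2:ℝ)^k)^2 * ((1/2)^j)^2 * (2^k * 2^j * 2^k)
            = (((1/2)^k * 2^k) * ((1/2)^k * 2^k)) * (((1/2)^j * 2^j) * (1/2)^j) := by ring
        rw [expand, hwu, hz]; ring
      calc x * e ≤ x * (B^2 * (2^(k+j) * 2^k)) := by
            apply mul_le_mul_of_nonneg_left h1 hx0.le
        _ = B^2 * (x * (2^(k+j) * 2^k)) := by ring
        _ = B^2 * (1/2)^j := by rw [h2]
    have hxlek : x ≤ (1/4)^k := by
      rw [hxval, ← hw2]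
      have hzz : ((1/2:ℝ)^j)^2 ≤ 1 := by nlinarith
      nlinarith [mul_nonneg (sq_nonneg ((1/2:ℝ)^k)) (sub_nonneg.mpr hzz)]
    refine ⟨hbase, ?_, ?_⟩
    · -- lower bound
      have hlog := mylog_ge hx0 (by linarith : x ≤ 1/2)
      have : -(x + 2*x^2) * e ≤ g j := by
        have : g j = Real.log (1-x) * e := rfl
        rw [this]
        apply mul_le_mul_of_nonneg_right hlog he0.le
      refine le_trans ?_ this
      have hxx : x * (x*e) ≤ (1/4)^k * (B^2 * (1/2)^j) := by
        apply mul_le_mul hxlek hxe_high (by positivity) (by positivity)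
      have e1 : -(x+2*x^2)*e = -(x*e) - 2*(x*(x*e)) := by ring
      have e2 : -(C*(1/2)^j) = -(B^2*(1/2)^j) - 2*((1/4)^k*(B^2*(1/2)^j)) := by rw [hC]; ring
      rw [e1, e2]
      linarith [hxx, hxe_high]
    · -- upper bound
      have hlog := mylog_le (by linarith : x < 1)
      have h1 : g j ≤ -x * e := by
        have : g j = Real.log (1-x) * e := rfl
        rw [this]
        apply mul_le_mul_of_nonneg_right hlog he0.le
      refine le_trans h1 ?_
      have e1 : -x*e = -(x*e) := by ring
      rw [e1]
      linarith [hxe_low]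
  -- summability
  have hhalf : Summable (fun j : ℕ => ((1/2:ℝ))^j) :=
    summable_geometric_of_lt_one (by norm_num) (by norm_num)
  have htsum_half : (∑' j : ℕ, ((1/2:ℝ))^j) = 2 := by
    rw [tsum_geometric_of_lt_one (by norm_num) (by norm_num)]; norm_num
  have hC0 : 0 < C := by positivity
  have hsumm : Summable g := by
    have hs : Summable (fun j : ℕ => C * (1/2)^j) := hhalf.mul_left C
    rw [← summable_neg_iff]
    apply hs.of_nonneg_of_le
    · intro j
      have := (pt j).2.2
      have h2 : (0:ℝ) < lam^2*(1/2)^j := by positivity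
      linarith
    · intro j
      have := (pt j).2.1
      linarith
  refine ⟨hsumm, ?_, ?_, ?_⟩
  · calc (∑' j, g j) ≤ (∑' j : ℕ, -(lam^2*(1/2)^j)) := by
          apply Summable.tsum_le_tsum (fun j => (pt j).2.2) hsumm ((hhalf.mul_left _).neg)
      _ = -(lam^2*2) := by
          rw [tsum_neg, tsum_mul_left, htsum_half]
  · calc -(C*2) = (∑' j : ℕ, -(C*(1/2)^j)) := by
          rw [tsum_neg, tsum_mul_left, htsum_half]
      _ ≤ (∑' j, g j) := by
          apply Summable.tsum_le_tsum (fun j => (pt j).2.1) ((hhalf.mul_left _).neg) hsumm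
  · have heq : ∀ j : ℕ, (1 - ((2:ℝ)^(k+j))⁻¹^2) ^ ((lam*2^(k+j)+mu+2)*(lam*2^k+mu+2))
        = Real.exp (g j) := by
      intro j
      rw [Real.rpow_def_of_pos (pt j).1]
    rw [tprod_congr heq]
    exact (hsumm.hasSum.rexp).tprod_eq

theorem stmt_9 (lam mu : ℝ) (hlam : 0 < lam) (hmu : 0 < mu)
    (P : ℕ → ℝ)
    (hP : ∀ k, P k = ∏' j : ℕ,
      (1 - ((2 : ℝ) ^ (k + j))⁻¹ ^ 2) ^ ((lam * 2 ^ (k + j) + mu + 2) * (lam * 2 ^ k + mu + 2))) :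
    liminf P atTop ≥ Real.exp (-2 * lam ^ 2) ∧
      Tendsto P atTop (nhds (Real.exp (-2 * lam ^ 2))) := by
  have hE : (-2*lam^2 : ℝ) = -(2*lam^2) := by ring
  set S : ℕ → ℝ := fun k => ∑' j : ℕ, Real.log (1 - ((2:ℝ)^(k+j))⁻¹^2) *
      ((lam * 2^(k+j) + mu + 2) * (lam * 2^k + mu + 2)) with hSdef
  set Lb : ℕ → ℝ := fun k => -((lam + (mu+2)*(1/2)^k)^2*(1+2*(1/4)^k)*2) with hLbdef
  have h1 : Tendsto (fun k : ℕ => ((1/2:ℝ))^k) atTop (nhds 0) :=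
    tendsto_pow_atTop_nhds_zero_of_lt_one (by norm_num) (by norm_num)
  have h2 : Tendsto (fun k : ℕ => ((1/4:ℝ))^k) atTop (nhds 0) :=
    tendsto_pow_atTop_nhds_zero_of_lt_one (by norm_num) (by norm_num)
  have hLb : Tendsto Lb atTop (nhds (-(2*lam^2))) := by
    have h : Tendsto Lb atTop (nhds (-((lam + (mu+2)*0)^2*(1+2*0)*2))) := by
      apply Tendsto.neg
      apply Tendsto.mul_const
      exact Tendsto.mul (((h1.const_mul (mu+2)).const_add lam).pow 2)
        ((h2.const_mul 2).const_add 1)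
    convert h using 2
    ring
  have hS : Tendsto S atTop (nhds (-(2*lam^2))) := by
    apply tendsto_of_tendsto_of_tendsto_of_le_of_le' hLb tendsto_const_nhds
    · filter_upwards [eventually_ge_atTop 1] with k hk
      exact (key lam mu hlam hmu k hk).2.2.1
    · filter_upwards [eventually_ge_atTop 1] with k hk
      have := (key lam mu hlam hmu k hk).2.1
      linarith
  have hten : Tendsto P atTop (nhds (Real.exp (-2 * lam^2))) := by
    rw [hE]
    have hPS : ∀ᶠ k in atTop, Real.exp (S k) = P k := by
      filter_upwards [eventually_ge_atTop 1] with k hk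
      rw [hP k, (key lam mu hlam hmu k hk).2.2.2]
    exact ((Real.continuous_exp.tendsto _).comp hS).congr' hPS
  exact ⟨ge_of_eq (hten.liminf_eq), hten⟩
end
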